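/- Let n ≥ 1 and let M = ℤ^n + ℤ·(1/2, …, 1/2) ⊆ ℝ^n. For every odd integer q ≥ 1 and every w ∈ (1/q)M, there exists u ∈ (1/q)ℤ^n with u − w ∈ M and with every coordinate of u of absolute value strictly less than 1/2. -/
import Mathlib


open Finset

/-- The lattice `M = ℤ^n + ℤ·(1/2, …, 1/2) ⊆ ℝ^n`, the union of `ℤ^n` and its translate by
`(1/2, …, 1/2)`. -/
def halfLattice (n : ℕ) : Set (Fin n → ℝ) :=
  {u | (∀ i, ∃ m : ℤ, u i = m) ∨ (∀ i, ∃ m : ℤ, u i = m + 1/2)}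

lemma bal_residue (q k : ℤ) (hq : q = 2 * k + 1) (hk : 0 ≤ k) (m : ℤ) :
    ∃ r : ℤ, q ∣ (m - r) ∧ |r| ≤ k := by
  have hqpos : 0 < q := by omega
  refine ⟨(m + k) % q - k, ⟨(m + k) / q, ?_⟩, ?_⟩
  · have := Int.mul_ediv_add_emod (m + k) q
    omega
  · have h1 : 0 ≤ (m + k) % q := Int.emod_nonneg _ (by omega)
    have h2 : (m + k) % q < q := Int.emod_lt_of_pos _ hqpos
    rw [abs_le]; omega

/-- For odd `q`, every class of `(1/q)M / M`, where `M = ℤ^n + ℤ·(1/2,…,1/2)`, has a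
representative in `(1/q)ℤ^n` all of whose coordinates have absolute value less than `1/2`. -/
theorem halfLattice_small_representatives (n : ℕ) (hn : 1 ≤ n)
    (q : ℤ) (hq : 1 ≤ q) (hodd : Odd q)
    (w : Fin n → ℝ) (hw : (q : ℝ) • w ∈ halfLattice n) :
    ∃ u : Fin n → ℝ, (∀ i, ∃ m : ℤ, (q : ℝ) * u i = m) ∧ u - w ∈ halfLattice n ∧
      ∀ i, |u i| < 1/2 := by
  obtain ⟨k, hk⟩ := hodd
  have hk0 : 0 ≤ k := by omega
  have hqR : (q : ℝ) ≠ 0 := by positivity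
  have hqRpos : (0 : ℝ) < q := by exact_mod_cast hq
  have habs : ∀ r : ℤ, |r| ≤ k → |(r : ℝ) / q| < 1 / 2 := by
    intro r hr
    rw [abs_div, abs_of_pos hqRpos, div_lt_iff₀ hqRpos]
    have : (|r| : ℝ) ≤ (k : ℝ) := by exact_mod_cast hr
    push_cast [hk]
    linarith
  rcases hw with h | h
  · choose m hm using h
    choose r hr habsr using fun i => bal_residue q k hk hk0 (m i)
    refine ⟨fun i => (r i : ℝ) / q, fun i => ⟨r i, by field_simp⟩, ?_, fun i => habs _ (habsr i)⟩
    left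
    intro i
    obtain ⟨c, hc⟩ := hr i
    refine ⟨-c, ?_⟩
    have hwi : (q : ℝ) * w i = m i := hm i
    have hc' : (r i : ℝ) = m i - q * c := by exact_mod_cast (by omega : r i = m i - q * c)
    have : (q : ℝ) * (((r i : ℝ) / q) - w i) = (q : ℝ) * (-c : ℤ) := by
      rw [mul_sub, mul_div_cancel₀ _ hqR, hwi, hc']; push_cast; ring
    have := mul_left_cancel₀ hqR this
    simpa [Pi.sub_apply] using this
  · choose m hm using h
    choose r hr habsr using fun i => bal_residue q k hk hk0 (m i + k + 1)
    refine ⟨fun i => (r i : ℝ) / q, fun i => ⟨r i, by field_simp⟩, ?_, fun i => habs _ (habsr i)⟩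
    right
    intro i
    obtain ⟨c, hc⟩ := hr i
    refine ⟨-c, ?_⟩
    have hwi : (q : ℝ) * w i = m i + 1/2 := hm i
    have hc' : (r i : ℝ) = m i + k + 1 - q * c := by
      exact_mod_cast (by omega : r i = m i + k + 1 - q * c)
    have hqk : (q : ℝ) = 2 * k + 1 := by exact_mod_cast hk
    have : (q : ℝ) * (((r i : ℝ) / q) - w i) = (q : ℝ) * ((-c : ℤ) + 1/2) := by
      rw [mul_sub, mul_div_cancel₀ _ hqR, hwi, hc']; push_cast; rw [hqk]; ring
    have := mul_left_cancel₀ hqR this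
    simpa [Pi.sub_apply] using this
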